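/- Let L and L̃ be symmetric positive definite m×m real matrices with the same correlation matrix, i.e., L_{ij}/√(L_{ii}L_{jj}) = L̃_{ij}/√(L̃_{ii}L̃_{jj}) for all i, j. Let K := L(L + I)^{-1}. Then the Kullback–Leibler divergence between the corresponding determinantal point processes satisfies D[P_L : P_{L̃}] := ∑_{A ⊆ {1,…,m}} P_L(A) · log( P_L(A)/P_{L̃}(A) ) = ∑_{a=1}^m K_{aa}·(log L_{aa} − log L̃_{aa}) − log det(L + I) + log det(L̃ + I). -/

import Mathlib

/-- The determinant of the principal submatrix of `M` with rows and columns in `A`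
(equal to `1` when `A = ∅`). -/
noncomputable def pminor {m : ℕ} (M : Matrix (Fin m) (Fin m) ℝ) (A : Finset (Fin m)) : ℝ :=
  (M.submatrix (fun i : A => (i : Fin m)) (fun j : A => (j : Fin m))).det

/-- The `L`-ensemble determinantal point process. -/
noncomputable def dppP {m : ℕ} (L : Matrix (Fin m) (Fin m) ℝ) (A : Finset (Fin m)) : ℝ :=
  pminor L A / (L + 1).det

lemma det_piecewise_one {m : ℕ} (M : Matrix (Fin m) (Fin m) ℝ) (s : Finset (Fin m)) :
    (Matrix.of (s.piecewise (fun i => M i) (fun i => (1 : Matrix (Fin m) (Fin m) ℝ) i))).det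
      = pminor M s := by
  rw [Matrix.twoBlockTriangular_det _ (· ∈ s) (by
    intro i hi j hj
    simp only [Matrix.of_apply, Finset.piecewise_eq_of_notMem _ _ _ hi]
    exact Matrix.one_apply_ne (fun h : i = j => hi (h ▸ hj)))]
  have h1 : (Matrix.of (s.piecewise (fun i => M i) (fun i => (1 : Matrix (Fin m) (Fin m) ℝ) i))).toSquareBlockProp
      (· ∈ s) = M.submatrix (fun i : s => (i : Fin m)) (fun j : s => (j : Fin m)) := by
    ext i j
    simp [Matrix.toSquareBlockProp, Finset.piecewise_eq_of_mem _ _ _ i.2]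
  have h2 : (Matrix.of (s.piecewise (fun i => M i) (fun i => (1 : Matrix (Fin m) (Fin m) ℝ) i))).toSquareBlockProp
      (fun i => ¬ (i ∈ s)) = 1 := by
    ext i j
    simp [Matrix.toSquareBlockProp, Finset.piecewise_eq_of_notMem _ _ _ i.2,
      Matrix.one_apply, Subtype.ext_iff]
  rw [h1, h2, Matrix.det_one, mul_one]; unfold pminor; congr!

lemma det_add_diagonal {m : ℕ} (M : Matrix (Fin m) (Fin m) ℝ) (d : Fin m → ℝ) :
    (M + Matrix.diagonal d).det
      = ∑ s : Finset (Fin m), (∏ i ∈ sᶜ, d i) * pminor M s := by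
  have key : (M + Matrix.diagonal d).det
      = Matrix.detRowAlternating.toMultilinearMap
          ((fun i => M i) + (fun i => Matrix.diagonal d i)) := rfl
  rw [key]
  rw [Matrix.detRowAlternating.toMultilinearMap.map_add_univ (fun i => M i)
      (fun i => Matrix.diagonal d i)]
  refine Finset.sum_congr rfl fun s _ => ?_
  have hrw : s.piecewise (fun i => M i) (fun i => Matrix.diagonal d i)
      = sᶜ.piecewise (fun i => d i • (s.piecewise (fun i => M i) (fun i => (1 : Matrix (Fin m) (Fin m) ℝ) i)) i)
          (s.piecewise (fun i => M i) (fun i => (1 : Matrix (Fin m) (Fin m) ℝ) i)) := by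
    ext i j
    by_cases hi : i ∈ s
    · simp [Finset.piecewise_eq_of_mem _ _ _ hi,
        Finset.piecewise_eq_of_notMem _ _ _ (by simpa using hi : i ∉ sᶜ)]
    · simp [Finset.piecewise_eq_of_notMem _ _ _ hi,
        Finset.piecewise_eq_of_mem _ _ _ (by simpa using hi : i ∈ sᶜ),
        Matrix.diagonal, Matrix.one_apply, mul_ite]
  rw [hrw]
  rw [Matrix.detRowAlternating.toMultilinearMap.map_piecewise_smul d _ sᶜ]
  rw [smul_eq_mul]
  congr 1
  exact det_piecewise_one M s

lemma sum_pminor {m : ℕ} (M : Matrix (Fin m) (Fin m) ℝ) :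
    ∑ s : Finset (Fin m), pminor M s = (M + 1).det := by
  have := det_add_diagonal M (fun _ => 1)
  simp only [Matrix.diagonal_one, Finset.prod_const_one, one_mul] at this
  exact this.symm

lemma sum_pminor_mem {m : ℕ} (M : Matrix (Fin m) (Fin m) ℝ) (a : Fin m) :
    ∑ s : Finset (Fin m), (if a ∈ s then pminor M s else 0)
      = (M + 1).det - (M + 1).adjugate a a := by
  have h1 := det_add_diagonal M (fun i => if i = a then (0:ℝ) else 1)
  have h2 : ∀ s : Finset (Fin m),
      (∏ i ∈ sᶜ, (if i = a then (0:ℝ) else 1)) = if a ∈ s then (1:ℝ) else 0 := by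
    intro s
    by_cases ha : a ∈ s
    · rw [if_pos ha, Finset.prod_eq_one]
      intro i hi
      rw [if_neg]
      rintro rfl
      exact (Finset.mem_compl.mp hi) ha
    · rw [if_neg ha]
      exact Finset.prod_eq_zero (Finset.mem_compl.mpr ha) (if_pos rfl)
  simp only [h2, ite_mul, one_mul, zero_mul] at h1
  rw [← h1]
  have h3 : M + Matrix.diagonal (fun i => if i = a then (0:ℝ) else 1)
      = (M + 1).updateRow a ((M + 1) a + (-1 : ℝ) • (Pi.single a 1 : Fin m → ℝ)) := by
    ext i j
    by_cases hi : i = a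
    · subst hi
      rw [Matrix.updateRow_self]
      simp only [Matrix.add_apply, Matrix.diagonal_apply, Matrix.one_apply, Pi.add_apply,
        Pi.smul_apply, Pi.single_apply, smul_eq_mul]
      by_cases h : i = j <;> simp [h, eq_comm]
    · rw [Matrix.updateRow_ne hi]
      simp only [Matrix.add_apply, Matrix.diagonal_apply, Matrix.one_apply]
      by_cases h : i = j
      · subst h; simp [hi]
      · simp [h]
  rw [h3, Matrix.det_updateRow_add, Matrix.det_updateRow_smul, Matrix.updateRow_eq_self,
    Matrix.adjugate_apply]
  ring

lemma posDef_pminor {m : ℕ} {M : Matrix (Fin m) (Fin m) ℝ} (hM : M.PosDef) (A : Finset (Fin m)) :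
    (M.submatrix (fun i : A => (i : Fin m)) (fun j : A => (j : Fin m))).PosDef := by
  refine Matrix.PosDef.of_dotProduct_mulVec_pos ?_ ?_
  · exact hM.1.submatrix _
  · intro x hx
    set y : Fin m → ℝ := fun i => if h : i ∈ A then x ⟨i, h⟩ else 0 with hy
    have hyA : ∀ i : A, y ↑i = x i := fun i => dif_pos i.2
    have hy0 : ∀ i, i ∉ A → y i = 0 := fun i hi => dif_neg hi
    have expand : ∀ v : Fin m → ℝ, (∀ i, i ∉ A → v i = 0) →
        dotProduct v (Matrix.mulVec M v) = ∑ i : A, v i.1 * (∑ j : A, M i.1 j.1 * v j.1) := by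
      intro v hv
      have h1 : ∀ i, (Matrix.mulVec M v) i = ∑ j : A, M i j.1 * v j.1 := by
        intro i
        rw [Matrix.mulVec, dotProduct, Finset.sum_coe_sort A (fun j => M i j * v j)]
        exact (Finset.sum_subset A.subset_univ
          (fun j _ hj => by rw [hv j hj, mul_zero])).symm
      simp only [dotProduct, h1]
      rw [Finset.sum_coe_sort A (fun i => v i * (∑ j : A, M i j.1 * v j.1))]
      exact (Finset.sum_subset A.subset_univ
        (fun i _ hi => by rw [hv i hi, zero_mul])).symm
    have hquad : dotProduct (star x)
          ((M.submatrix (fun i : A => (i : Fin m)) (fun j : A => (j : Fin m))).mulVec x)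
        = dotProduct (star y) (Matrix.mulVec M y) := by
      simp only [star_trivial]
      rw [expand y hy0]
      simp only [dotProduct, Matrix.mulVec, Matrix.submatrix_apply, hyA]
    rw [hquad]
    apply hM.dotProduct_mulVec_pos
    intro h0
    obtain ⟨i, hi⟩ := Function.ne_iff.mp hx
    exact hi (by rw [← hyA i, h0]; rfl)

lemma posdef_diag_pos {m : ℕ} {M : Matrix (Fin m) (Fin m) ℝ} (hM : M.PosDef) (a : Fin m) :
    0 < M a a := by
  have := hM.dotProduct_mulVec_pos (x := Pi.single a 1) (by
    intro h
    have := congrFun h a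
    simp at this)
  simpa [dotProduct, Matrix.mulVec, Pi.single_apply, mul_ite, ite_mul,
    Finset.sum_ite_eq, Finset.sum_ite_eq'] using this

lemma pminor_pos {m : ℕ} {M : Matrix (Fin m) (Fin m) ℝ} (hM : M.PosDef) (A : Finset (Fin m)) :
    0 < pminor M A :=
  (posDef_pminor hM A).det_pos

lemma pminor_scale {m : ℕ} (L L' : Matrix (Fin m) (Fin m) ℝ) (d : Fin m → ℝ)
    (hd : ∀ i j, L' i j = d i * d j * L i j) (A : Finset (Fin m)) :
    pminor L' A = (∏ i ∈ A, d i ^ 2) * pminor L A := by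
  have hsub : L'.submatrix (fun i : A => (i : Fin m)) (fun j : A => (j : Fin m))
      = Matrix.diagonal (fun i : A => d i.1)
        * (L.submatrix (fun i : A => (i : Fin m)) (fun j : A => (j : Fin m)))
        * Matrix.diagonal (fun i : A => d i.1) := by
    ext i j
    rw [Matrix.mul_diagonal, Matrix.diagonal_mul, Matrix.submatrix_apply,
      Matrix.submatrix_apply, hd]
    ring
  have hp : (∏ i ∈ A, d i ^ 2) = (∏ i : A, d i.1) * (∏ i : A, d i.1) := by
    rw [← Finset.prod_mul_distrib, ← Finset.prod_coe_sort A (fun i => d i ^ 2)]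
    exact Finset.prod_congr rfl fun i _ => sq (d i.1)
  rw [pminor, hsub, Matrix.det_mul, Matrix.det_mul, Matrix.det_diagonal, hp, pminor]
  ring

theorem dpp_kl_divergence_same_correlation (m : ℕ) (L L' : Matrix (Fin m) (Fin m) ℝ)
    (hsymm : L.IsSymm) (hL : L.PosDef)
    (hsymm' : L'.IsSymm) (hL' : L'.PosDef)
    (hcorr : ∀ i j, L i j / Real.sqrt (L i i * L j j)
      = L' i j / Real.sqrt (L' i i * L' j j))
    (K : Matrix (Fin m) (Fin m) ℝ) (hK : K = L * (L + 1)⁻¹) :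
    ∑ A : Finset (Fin m), dppP L A * Real.log (dppP L A / dppP L' A)
      = (∑ a : Fin m, K a a * (Real.log (L a a) - Real.log (L' a a)))
        - Real.log (L + 1).det + Real.log (L' + 1).det := by
  classical
  have hBpd : (L + 1).PosDef := hL.add_posSemidef Matrix.PosSemidef.one
  have hB'pd : (L' + 1).PosDef := hL'.add_posSemidef Matrix.PosSemidef.one
  have hBdet : 0 < (L + 1).det := hBpd.det_pos
  have hB'det : 0 < (L' + 1).det := hB'pd.det_pos
  have hLd : ∀ i, 0 < L i i := posdef_diag_pos hL
  have hL'd : ∀ i, 0 < L' i i := posdef_diag_pos hL'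
  set d : Fin m → ℝ := fun i => Real.sqrt (L' i i) / Real.sqrt (L i i) with hdd
  have hd : ∀ i j, L' i j = d i * d j * L i j := by
    intro i j
    have h := hcorr i j
    rw [Real.sqrt_mul (hLd i).le, Real.sqrt_mul (hL'd i).le,
      div_eq_div_iff
        (mul_pos (Real.sqrt_pos.mpr (hLd i)) (Real.sqrt_pos.mpr (hLd j))).ne'
        (mul_pos (Real.sqrt_pos.mpr (hL'd i)) (Real.sqrt_pos.mpr (hL'd j))).ne'] at h
    simp only [hdd]
    rw [div_mul_div_comm, div_mul_eq_mul_div, eq_div_iff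
      (mul_pos (Real.sqrt_pos.mpr (hLd i)) (Real.sqrt_pos.mpr (hLd j))).ne']
    linear_combination -h
  have hd2 : ∀ i, d i ^ 2 = L' i i / L i i := by
    intro i
    rw [hdd]
    rw [div_pow, Real.sq_sqrt (hL'd i).le, Real.sq_sqrt (hLd i).le]
  -- log of pminor ratio
  set c : Fin m → ℝ := fun i => Real.log (L i i) - Real.log (L' i i) with hc
  have hratio : ∀ A : Finset (Fin m), Real.log (dppP L A / dppP L' A)
      = (∑ i ∈ A, c i) - Real.log (L + 1).det + Real.log (L' + 1).det := by
    intro A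
    have hp : 0 < pminor L A := pminor_pos hL A
    have hp' : 0 < pminor L' A := pminor_pos hL' A
    have h1 : 0 < dppP L A := div_pos hp hBdet
    have h2 : 0 < dppP L' A := div_pos hp' hB'det
    rw [Real.log_div h1.ne' h2.ne', dppP, dppP, Real.log_div hp.ne' hBdet.ne',
      Real.log_div hp'.ne' hB'det.ne']
    have hlogA : Real.log (pminor L' A)
        = (∑ i ∈ A, (Real.log (L' i i) - Real.log (L i i))) + Real.log (pminor L A) := by
      rw [pminor_scale L L' d hd A,
        Real.log_mul (Finset.prod_ne_zero_iff.mpr fun i _ => by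
          rw [hd2 i]; exact (div_pos (hL'd i) (hLd i)).ne') hp.ne',
        Real.log_prod (fun i _ => by
          rw [hd2 i]; exact (div_pos (hL'd i) (hLd i)).ne')]
      congr 1
      exact Finset.sum_congr rfl fun i _ => by
        rw [hd2 i, Real.log_div (hL'd i).ne' (hLd i).ne']
    rw [hlogA, hc]
    simp only [Finset.sum_sub_distrib]
    ring
  have hone : ∑ A : Finset (Fin m), dppP L A = 1 := by
    simp only [dppP]
    rw [← Finset.sum_div, sum_pminor, div_self hBdet.ne']
  have hmarg : ∀ a : Fin m, ∑ A : Finset (Fin m), (if a ∈ A then dppP L A else 0)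
      = K a a := by
    intro a
    have hinv : (L + 1) * (L + 1)⁻¹ = 1 :=
      Matrix.mul_nonsing_inv _ (isUnit_iff_ne_zero.mpr hBdet.ne')
    have hKa : K a a = 1 - (L + 1)⁻¹ a a := by
      have hKm : K = 1 - (L + 1)⁻¹ := by
        have hL1 : L * (L + 1)⁻¹ = ((L + 1) - 1) * (L + 1)⁻¹ := by
          rw [add_sub_cancel_right]
        rw [hK, hL1, Matrix.sub_mul, hinv, Matrix.one_mul]
      rw [hKm, Matrix.sub_apply, Matrix.one_apply_eq]
    have hadj : (L + 1).adjugate a a = (L + 1).det * (L + 1)⁻¹ a a := by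
      rw [Matrix.inv_def, Matrix.smul_apply, Ring.inverse_eq_inv', smul_eq_mul]
      field_simp
    calc ∑ A : Finset (Fin m), (if a ∈ A then dppP L A else 0)
        = (∑ A : Finset (Fin m), if a ∈ A then pminor L A else 0) / (L + 1).det := by
          rw [Finset.sum_div]
          refine Finset.sum_congr rfl fun A _ => ?_
          by_cases h : a ∈ A <;> simp [h, dppP]
      _ = ((L + 1).det - (L + 1).adjugate a a) / (L + 1).det := by rw [sum_pminor_mem]
      _ = K a a := by
          rw [hadj, hKa, sub_div, div_self hBdet.ne', mul_comm ((L+1).det),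
            mul_div_assoc, div_self hBdet.ne', mul_one]
  calc ∑ A : Finset (Fin m), dppP L A * Real.log (dppP L A / dppP L' A)
      = ∑ A : Finset (Fin m), (dppP L A * (∑ i ∈ A, c i)
          + dppP L A * (Real.log (L' + 1).det - Real.log (L + 1).det)) := by
        refine Finset.sum_congr rfl fun A _ => ?_
        rw [hratio A]; ring
    _ = (∑ A : Finset (Fin m), dppP L A * (∑ i ∈ A, c i))
          + (∑ A : Finset (Fin m), dppP L A)
            * (Real.log (L' + 1).det - Real.log (L + 1).det) := by
        rw [Finset.sum_add_distrib, Finset.sum_mul]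
    _ = (∑ A : Finset (Fin m), ∑ i : Fin m, (if i ∈ A then dppP L A else 0) * c i)
          + 1 * (Real.log (L' + 1).det - Real.log (L + 1).det) := by
        rw [hone]
        congr 1
        refine Finset.sum_congr rfl fun A _ => ?_
        calc dppP L A * (∑ i ∈ A, c i) = ∑ i ∈ A, dppP L A * c i := Finset.mul_sum _ _ _
          _ = ∑ i : Fin m, if i ∈ A then dppP L A * c i else 0 := by
              rw [Finset.sum_ite_mem, Finset.univ_inter]
          _ = ∑ i : Fin m, (if i ∈ A then dppP L A else 0) * c i := by
              refine Finset.sum_congr rfl fun i _ => ?_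
              by_cases h : i ∈ A <;> simp [h]
    _ = (∑ i : Fin m, K i i * c i)
          + 1 * (Real.log (L' + 1).det - Real.log (L + 1).det) := by
        rw [Finset.sum_comm]
        congr 1
        refine Finset.sum_congr rfl fun i _ => ?_
        rw [← Finset.sum_mul, hmarg i]
    _ = (∑ a : Fin m, K a a * (Real.log (L a a) - Real.log (L' a a)))
        - Real.log (L + 1).det + Real.log (L' + 1).det := by
        rw [hc]; ring
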